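/- The function A ↦ det(A)^(1/n) is concave on the set of n×n positive semi-definite real symmetric matrices; that is, for PSD matrices A, B and t ∈ [0,1], det(tA + (1-t)B)^(1/n) ≥ t·det(A)^(1/n) + (1-t)·det(B)^(1/n). -/

import Mathlib

open Matrix


open Finset in
lemma geom_mean_superadd (n : ℕ) (hn : 0 < n) (f g : Fin n → ℝ)
    (hf : ∀ i, 0 ≤ f i) (hg : ∀ i, 0 ≤ g i) :
    (∏ i, f i) ^ ((n : ℝ)⁻¹) + (∏ i, g i) ^ ((n : ℝ)⁻¹)
      ≤ (∏ i, (f i + g i)) ^ ((n : ℝ)⁻¹) := by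
  have hn' : (0:ℝ) < n := Nat.cast_pos.mpr hn
  by_cases hpos : ∀ i, 0 < f i + g i
  · set h := fun i => f i + g i with hh
    have hP : 0 < ∏ i, h i := Finset.prod_pos fun i _ => hpos i
    have hPr : 0 < (∏ i, h i) ^ ((n : ℝ)⁻¹) := Real.rpow_pos_of_pos hP _
    rw [← div_le_one hPr, add_div]
    have key : ∀ (u : Fin n → ℝ), (∀ i, 0 ≤ u i) →
        (∏ i, u i) ^ ((n : ℝ)⁻¹) / (∏ i, h i) ^ ((n : ℝ)⁻¹)
          ≤ ∑ i, ((n:ℝ)⁻¹) * (u i / h i) := by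
      intro u hu
      rw [← Real.div_rpow (Finset.prod_nonneg fun i _ => hu i) hP.le,
        ← Finset.prod_div_distrib]
      calc (∏ i, u i / h i) ^ ((n : ℝ)⁻¹)
          = ∏ i, (u i / h i) ^ ((n : ℝ)⁻¹) := by
            rw [← Real.finset_prod_rpow _ _ (fun i _ => div_nonneg (hu i) (hpos i).le)]
        _ ≤ ∑ i, ((n:ℝ)⁻¹) * (u i / h i) := by
            apply Real.geom_mean_le_arith_mean_weighted
            · intro i _; positivity
            · simp [Finset.card_univ]; field_simp
            · intro i _; exact div_nonneg (hu i) (hpos i).le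
    calc (∏ i, f i) ^ ((n : ℝ)⁻¹) / (∏ i, h i) ^ ((n : ℝ)⁻¹)
          + (∏ i, g i) ^ ((n : ℝ)⁻¹) / (∏ i, h i) ^ ((n : ℝ)⁻¹)
        ≤ (∑ i, ((n:ℝ)⁻¹) * (f i / h i)) + ∑ i, ((n:ℝ)⁻¹) * (g i / h i) :=
          add_le_add (key f hf) (key g hg)
      _ = ∑ i, ((n:ℝ)⁻¹) * ((f i + g i) / h i) := by
          rw [← Finset.sum_add_distrib]; congr 1; ext i; ring
      _ = 1 := by
          simp only [hh]
          rw [Finset.sum_congr rfl (fun i _ => by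
            rw [div_self (hpos i).ne', mul_one])]
          simp [Finset.card_univ]; field_simp
  · push_neg at hpos
    obtain ⟨i, hi⟩ := hpos
    have hfi : f i = 0 := le_antisymm (by linarith [hg i]) (hf i)
    have hgi : g i = 0 := le_antisymm (by linarith [hf i]) (hg i)
    have h1 : (∏ j, f j) = 0 := Finset.prod_eq_zero (Finset.mem_univ i) hfi
    have h2 : (∏ j, g j) = 0 := Finset.prod_eq_zero (Finset.mem_univ i) hgi
    have h3 : (∏ j, (f j + g j)) = 0 :=
      Finset.prod_eq_zero (Finset.mem_univ i) (by rw [hfi, hgi, add_zero])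
    rw [h1, h2, h3, Real.zero_rpow (by positivity)]
    norm_num

lemma psd_det_nonneg {n : ℕ} {A : Matrix (Fin n) (Fin n) ℝ} (hA : A.PosSemidef) :
    0 ≤ A.det := by
  have h := hA.1.det_eq_prod_eigenvalues
  rw [h]

  exact Finset.prod_nonneg fun i _ => hA.eigenvalues_nonneg i

lemma psd_det_eq_zero {n : ℕ} {A : Matrix (Fin n) (Fin n) ℝ} (hA : A.PosSemidef)
    (h : ¬ A.PosDef) : A.det = 0 := by
  rw [Matrix.posDef_iff_dotProduct_mulVec] at h
  push_neg at h
  obtain ⟨x, hx, hx2⟩ := h hA.1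
  have h0 : star x ⬝ᵥ A *ᵥ x = 0 := le_antisymm hx2 (hA.dotProduct_mulVec_nonneg x)
  have := (hA.dotProduct_mulVec_zero_iff x).mp h0
  exact (Matrix.exists_mulVec_eq_zero_iff.mp ⟨x, hx, this⟩)



lemma det_one_add_psd {n : ℕ} {C : Matrix (Fin n) (Fin n) ℝ} (hCH : C.IsHermitian) :
    (1 + C).det = ∏ i, (1 + hCH.eigenvalues i) := by
  set U : Matrix (Fin n) (Fin n) ℝ := (hCH.eigenvectorUnitary : Matrix (Fin n) (Fin n) ℝ)
  have hU1 : U * star U = 1 := Matrix.mem_unitaryGroup_iff.mp hCH.eigenvectorUnitary.2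
  have hU2 : star U * U = 1 := Matrix.mem_unitaryGroup_iff'.mp hCH.eigenvectorUnitary.2
  have h1C : 1 + C = U * (1 + diagonal (RCLike.ofReal ∘ hCH.eigenvalues)) * star U := by
    rw [Matrix.mul_add, Matrix.add_mul, Matrix.mul_one, hU1]
    congr 1
    exact hCH.spectral_theorem
  rw [h1C, det_mul, det_mul]
  have hdetU : U.det * (star U).det = 1 := by rw [← det_mul, hU1, det_one]
  have : U.det * ((1 : Matrix (Fin n) (Fin n) ℝ) + diagonal (RCLike.ofReal ∘ hCH.eigenvalues)).det * (star U).det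
      = ((1 : Matrix (Fin n) (Fin n) ℝ) + diagonal (RCLike.ofReal ∘ hCH.eigenvalues)).det * (U.det * (star U).det) := by ring
  rw [this, hdetU, mul_one]
  have hdiag : (1 : Matrix (Fin n) (Fin n) ℝ) + diagonal (RCLike.ofReal ∘ hCH.eigenvalues)
      = diagonal (fun i => 1 + hCH.eigenvalues i) := by
    rw [← Matrix.diagonal_one, Matrix.diagonal_add]
    rfl
  rw [hdiag, det_diagonal]

open scoped MatrixOrder in
lemma minkowski_posdef {n : ℕ} (hn : 0 < n) {A B : Matrix (Fin n) (Fin n) ℝ}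
    (hA : A.PosDef) (hB : B.PosSemidef) :
    A.det ^ ((n : ℝ)⁻¹) + B.det ^ ((n : ℝ)⁻¹) ≤ (A + B).det ^ ((n : ℝ)⁻¹) := by
  set S := CFC.sqrt A with hSdef
  have hSH : S.IsHermitian := (CFC.sqrt_nonneg A).posSemidef.1
  have hSS : S * S = A := CFC.sqrt_mul_sqrt_self A hA.posSemidef.nonneg
  have hdetS : S.det * S.det = A.det := by rw [← det_mul, hSS]
  have hdetA : 0 < A.det := hA.det_pos
  have hdS : S.det ≠ 0 := by
    intro h; rw [h, mul_zero] at hdetS; exact hdetA.ne' hdetS.symm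
  have hSU : IsUnit S.det := hdS.isUnit
  set C := S⁻¹ * B * S⁻¹ with hCdef
  have hSinvH : (S⁻¹).IsHermitian := hSH.inv
  have hC : C.PosSemidef := by
    have := hB.conjTranspose_mul_mul_same S⁻¹
    rwa [hSinvH.eq] at this
  have hBC : S * C * S = B := by
    rw [hCdef, Matrix.mul_assoc, Matrix.mul_assoc, Matrix.mul_assoc,
      Matrix.nonsing_inv_mul S hSU, Matrix.mul_one, ← Matrix.mul_assoc,
      Matrix.mul_nonsing_inv S hSU, Matrix.one_mul]
  have hAB : A + B = S * (1 + C) * S := by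
    rw [Matrix.mul_add, Matrix.add_mul, Matrix.mul_one, hSS, hBC]
  have hCH : C.IsHermitian := hC.1
  have hev : ∀ i, 0 ≤ hCH.eigenvalues i := hC.eigenvalues_nonneg
  have hdetC : C.det = ∏ i, hCH.eigenvalues i := by
    simpa using hCH.det_eq_prod_eigenvalues
  have hdetB : B.det = A.det * C.det := by
    rw [← hBC, det_mul, det_mul, ← hdetS]; ring
  have hdetAB : (A + B).det = A.det * ∏ i, (1 + hCH.eigenvalues i) := by
    rw [hAB, det_mul, det_mul, det_one_add_psd hCH, ← hdetS]; ring
  have hrA : 0 ≤ A.det ^ ((n : ℝ)⁻¹) := Real.rpow_nonneg hdetA.le _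
  have hgeom := geom_mean_superadd n hn (fun _ => 1) hCH.eigenvalues
    (fun _ => zero_le_one) hev
  simp only [Finset.prod_const_one, Real.one_rpow] at hgeom
  calc A.det ^ ((n : ℝ)⁻¹) + B.det ^ ((n : ℝ)⁻¹)
      = A.det ^ ((n : ℝ)⁻¹) * (1 + (∏ i, hCH.eigenvalues i) ^ ((n : ℝ)⁻¹)) := by
        rw [hdetB, hdetC, Real.mul_rpow hdetA.le
          (Finset.prod_nonneg fun i _ => hev i)]
        ring
    _ ≤ A.det ^ ((n : ℝ)⁻¹) * (∏ i, (1 + hCH.eigenvalues i)) ^ ((n : ℝ)⁻¹) :=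
        mul_le_mul_of_nonneg_left hgeom hrA
    _ = (A + B).det ^ ((n : ℝ)⁻¹) := by
        rw [hdetAB, Real.mul_rpow hdetA.le
          (Finset.prod_nonneg fun i _ => by linarith [hev i])]

lemma minkowski_det {n : ℕ} (hn : 0 < n) {A B : Matrix (Fin n) (Fin n) ℝ}
    (hA : A.PosSemidef) (hB : B.PosSemidef) :
    A.det ^ ((n : ℝ)⁻¹) + B.det ^ ((n : ℝ)⁻¹) ≤ (A + B).det ^ ((n : ℝ)⁻¹) := by
  by_cases hA' : A.PosDef
  · exact minkowski_posdef hn hA' hB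
  by_cases hB' : B.PosDef
  · rw [add_comm (A.det ^ _), add_comm A B]
    exact minkowski_posdef hn hB' hA
  have hdA : A.det = 0 := psd_det_eq_zero hA hA'
  have hdB : B.det = 0 := psd_det_eq_zero hB hB'
  have hn' : ((n : ℝ))⁻¹ ≠ 0 := by positivity
  rw [hdA, hdB, Real.zero_rpow hn', add_zero]
  exact Real.rpow_nonneg (psd_det_nonneg (hA.add hB)) _

lemma psd_smul {n : ℕ} {A : Matrix (Fin n) (Fin n) ℝ} (hA : A.PosSemidef) {t : ℝ}
    (ht : 0 ≤ t) : (t • A).PosSemidef := by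
  refine Matrix.posSemidef_iff_dotProduct_mulVec.mpr ⟨?_, fun x => ?_⟩
  · rw [Matrix.IsHermitian, conjTranspose_smul, star_trivial, hA.1.eq]
  · rw [smul_mulVec, dotProduct_smul, smul_eq_mul]
    exact mul_nonneg ht (hA.dotProduct_mulVec_nonneg x)

lemma psd_det_nonneg' {n : ℕ} {A : Matrix (Fin n) (Fin n) ℝ} (hA : A.PosSemidef) :
    0 ≤ A.det := by
  rw [hA.1.det_eq_prod_eigenvalues]
  exact Finset.prod_nonneg fun i _ => hA.eigenvalues_nonneg i

lemma smul_det_rpow {n : ℕ} (hn : 0 < n) {A : Matrix (Fin n) (Fin n) ℝ}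
    (hA : A.PosSemidef) {t : ℝ} (ht : 0 ≤ t) :
    (t • A).det ^ ((n : ℝ)⁻¹) = t * A.det ^ ((n : ℝ)⁻¹) := by
  have hn' : ((n : ℝ)) ≠ 0 := by positivity
  rw [Matrix.det_smul, Fintype.card_fin,
    Real.mul_rpow (pow_nonneg ht n) (psd_det_nonneg' hA),
    ← Real.rpow_natCast t n, ← Real.rpow_mul ht, mul_inv_cancel₀ hn', Real.rpow_one]

/-- The function `A ↦ det A ^ (1/n)` is concave on PSD matrices. -/
theorem det_rpow_concave_on_posSemidef (n : ℕ) (A B : Matrix (Fin n) (Fin n) ℝ)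
    (hA : A.PosSemidef) (hB : B.PosSemidef) (t : ℝ) (ht0 : 0 ≤ t) (ht1 : t ≤ 1) :
    t * A.det ^ ((n : ℝ)⁻¹) + (1 - t) * B.det ^ ((n : ℝ)⁻¹)
      ≤ (t • A + (1 - t) • B).det ^ ((n : ℝ)⁻¹) := by
  rcases Nat.eq_zero_or_pos n with h0 | hn
  · subst h0
    simp only [Matrix.det_fin_zero, Real.one_rpow]
    linarith
  · have h1 : (t • A).PosSemidef := psd_smul hA ht0
    have h2 : ((1 - t) • B).PosSemidef := psd_smul hB (by linarith)
    have key := minkowski_det hn h1 h2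
    rwa [smul_det_rpow hn hA ht0, smul_det_rpow hn hB (by linarith)] at key
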